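/- Failure of Gauss–Legendre point unisolvence for the quadratic case: let V₁, V₂, V₃ be affinely independent points of ℝ² with barycentric coordinates λ₁, λ₂, λ₃, and define the quadratic polynomial q := 2 − 3(λ₁² + λ₂² + λ₃²). Then q vanishes at each of the six Gauss–Legendre points (X+Y)/2 ± (Y−X)/(2√3) of the three edges of the triangle (where {X,Y} ranges over the three pairs of distinct vertices), while q evaluated at the barycenter (V₁+V₂+V₃)/3 equals 1; in particular q is not the zero polynomial. -/
import Mathlib


open MeasureTheory Polynomial

/-- The "minus" Gauss–Legendre point of the edge from `X` to `Y`. -/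
noncomputable def gaussMinus (X Y : Fin 2 → ℝ) : Fin 2 → ℝ :=
  (1 / 2 : ℝ) • (X + Y) - (1 / (2 * Real.sqrt 3)) • (Y - X)

/-- The "plus" Gauss–Legendre point of the edge from `X` to `Y`. -/
noncomputable def gaussPlus (X Y : Fin 2 → ℝ) : Fin 2 → ℝ :=
  (1 / 2 : ℝ) • (X + Y) + (1 / (2 * Real.sqrt 3)) • (Y - X)

lemma aff_apply (f : (Fin 2 → ℝ) →ᵃ[ℝ] ℝ) (x : Fin 2 → ℝ) :
    f x = f.linear x + f 0 := by
  simpa using f.map_vadd 0 x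

lemma aff2 (f : (Fin 2 → ℝ) →ᵃ[ℝ] ℝ) (a b : ℝ) (hab : a + b = 1) (X Y : Fin 2 → ℝ) :
    f (a • X + b • Y) = a * f X + b * f Y := by
  rw [aff_apply f (a • X + b • Y), aff_apply f X, aff_apply f Y, map_add, _root_.map_smul, _root_.map_smul]
  simp only [smul_eq_mul]
  linear_combination (-(f 0)) * hab

lemma aff3 (f : (Fin 2 → ℝ) →ᵃ[ℝ] ℝ) (a b c : ℝ) (hab : a + b + c = 1)
    (X Y Z : Fin 2 → ℝ) :
    f (a • X + b • Y + c • Z) = a * f X + b * f Y + c * f Z := by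
  rw [aff_apply f (a • X + b • Y + c • Z), aff_apply f X, aff_apply f Y, aff_apply f Z,
    map_add, map_add, _root_.map_smul, _root_.map_smul, _root_.map_smul]
  simp only [smul_eq_mul]
  linear_combination (-(f 0)) * hab

/-- The quadratic `2 − 3(λ₁² + λ₂² + λ₃²)` vanishes at the six Gauss–Legendre points of the
three edges, yet equals `1` at the barycenter; hence Gauss–Legendre point evaluations are
not unisolvent for quadratics. -/
theorem gauss_points_not_unisolvent_quadratic
    (V : Fin 3 → (Fin 2 → ℝ)) (hV : AffineIndependent ℝ V)
    (lam : Fin 3 → ((Fin 2 → ℝ) →ᵃ[ℝ] ℝ))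
    (hlam : ∀ i j : Fin 3, lam i (V j) = if i = j then 1 else 0)
    (q : (Fin 2 → ℝ) → ℝ)
    (hq : ∀ x : Fin 2 → ℝ, q x = 2 - 3 * ((lam 0 x) ^ 2 + (lam 1 x) ^ 2 + (lam 2 x) ^ 2)) :
    (∀ i j : Fin 3, i ≠ j →
      q (gaussMinus (V i) (V j)) = 0 ∧ q (gaussPlus (V i) (V j)) = 0) ∧
    q ((1 / 3 : ℝ) • (V 0 + V 1 + V 2)) = 1 := by
  set s : ℝ := Real.sqrt 3 with hsdef
  have hs2 : s ^ 2 = 3 := Real.sq_sqrt (by norm_num)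
  have hs0 : s ≠ 0 := by
    intro h; rw [h] at hs2; norm_num at hs2
  have harith : ∀ a b : ℝ, (a = 1/2 + 1/(2*s) ∧ b = 1/2 - 1/(2*s)) ∨
      (a = 1/2 - 1/(2*s) ∧ b = 1/2 + 1/(2*s)) → a ^ 2 + b ^ 2 = 2/3 := by
    rintro a b (⟨ha, hb⟩ | ⟨ha, hb⟩) <;> subst ha hb <;> field_simp <;>
      linear_combination (-2 : ℝ) * hs2
  have hsum1p : (1/2 + 1/(2*s)) + (1/2 - 1/(2*s)) = 1 := by ring
  have hsum1m : (1/2 - 1/(2*s)) + (1/2 + 1/(2*s)) = 1 := by ring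
  have hptm : ∀ X Y : Fin 2 → ℝ, gaussMinus X Y =
      (1/2 + 1/(2*s)) • X + (1/2 - 1/(2*s)) • Y := by
    intro X Y; funext t
    simp only [gaussMinus, Pi.add_apply, Pi.sub_apply, Pi.smul_apply, smul_eq_mul, ← hsdef]
    ring
  have hptp : ∀ X Y : Fin 2 → ℝ, gaussPlus X Y =
      (1/2 - 1/(2*s)) • X + (1/2 + 1/(2*s)) • Y := by
    intro X Y; funext t
    simp only [gaussPlus, Pi.add_apply, Pi.sub_apply, Pi.smul_apply, smul_eq_mul, ← hsdef]
    ring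
  constructor
  · intro i j hij
    have key : ∀ (a b : ℝ), a + b = 1 → a ^ 2 + b ^ 2 = 2/3 →
        q (a • V i + b • V j) = 0 := by
      intro a b hab hab2
      rw [hq]
      have h0 := aff2 (lam 0) a b hab (V i) (V j)
      have h1 := aff2 (lam 1) a b hab (V i) (V j)
      have h2 := aff2 (lam 2) a b hab (V i) (V j)
      rw [h0, h1, h2]
      fin_cases i <;> fin_cases j <;> simp_all [hlam] <;> linarith
    constructor
    · rw [hptm]; exact key _ _ hsum1p (harith _ _ (Or.inl ⟨rfl, rfl⟩))
    · rw [hptp]; exact key _ _ hsum1m (harith _ _ (Or.inr ⟨rfl, rfl⟩))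
  · have hbar : (1 / 3 : ℝ) • (V 0 + V 1 + V 2) =
        (1/3 : ℝ) • V 0 + (1/3 : ℝ) • V 1 + (1/3 : ℝ) • V 2 := by
      funext t; simp [Pi.smul_apply]; ring
    rw [hbar, hq]
    have h13 : (1/3 : ℝ) + 1/3 + 1/3 = 1 := by norm_num
    rw [aff3 (lam 0) _ _ _ h13, aff3 (lam 1) _ _ _ h13, aff3 (lam 2) _ _ _ h13]
    simp [hlam]
    norm_num
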